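/- If (μ,p) is a bidder-optimal core outcome, i.e., a core outcome such that for every core outcome (ν,q) one has π_i(μ(i),p) ≥ π_i(ν(i),q) for all bidders i, then (μ,p) maximizes welfare among all core outcomes: Σ_{i∈B} v_i(μ(i)) ≥ Σ_{i∈B} v_i(ν(i)) for every core outcome (ν,q). -/

import Mathlib

open scoped Classical

/-- Goods are indexed by `Fin (m+1)`; good `0` is the dummy good. -/
abbrev Good (m : ℕ) : Type := Fin (m + 1)

/-- Utility `π_i(j,p)`: `v_i(j) - p(j)` if `p(j) ≤ b^i`, and `-∞` otherwise. -/
noncomputable def util {n m : ℕ} (v : Fin n → Good m → ℕ) (b : Fin n → ℕ)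
    (p : Good m → ℝ) (i : Fin n) (j : Good m) : WithBot ℝ :=
  if p j ≤ (b i : ℝ) then (((v i j : ℝ) - p j : ℝ) : WithBot ℝ) else ⊥

/-- An assignment: each non-dummy good is assigned to at most one bidder. -/
def IsAssignment {n m : ℕ} (μ : Fin n → Good m) : Prop :=
  ∀ j : Good m, j ≠ 0 → ∀ i i' : Fin n, μ i = j → μ i' = j → i = i'

/-- A price vector: nonnegative prices with `p(0) = 0`. -/
def IsPriceVec {m : ℕ} (p : Good m → ℝ) : Prop :=
  p 0 = 0 ∧ ∀ j, 0 ≤ p j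

/-- An outcome: an assignment together with a price vector such that no budget is
violated and every positively priced good is assigned to exactly one bidder. -/
def IsOutcome {n m : ℕ} (b : Fin n → ℕ) (μ : Fin n → Good m) (p : Good m → ℝ) : Prop :=
  IsAssignment μ ∧ IsPriceVec p ∧ (∀ i, p (μ i) ≤ (b i : ℝ)) ∧
    ∀ j : Good m, 0 < p j → ∃! i, μ i = j

/-- A blocking pair `(i,j)`: `π_i(j,p) > π_i(μ(i),p)` and `p(j) < b^i`. -/
def IsBlockingPair {n m : ℕ} (v : Fin n → Good m → ℕ) (b : Fin n → ℕ)
    (μ : Fin n → Good m) (p : Good m → ℝ) (i : Fin n) (j : Good m) : Prop :=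
  util v b p i (μ i) < util v b p i j ∧ p j < (b i : ℝ)

/-- A core outcome: an outcome with no blocking pairs. -/
def IsCore {n m : ℕ} (v : Fin n → Good m → ℕ) (b : Fin n → ℕ)
    (μ : Fin n → Good m) (p : Good m → ℝ) : Prop :=
  IsOutcome b μ p ∧ ∀ i j, ¬ IsBlockingPair v b μ p i j

/-- For an outcome, the sum of prices of assigned goods equals the sum of all prices. -/
lemma sum_price_assigned {n m : ℕ} {b : Fin n → ℕ} {μ : Fin n → Good m} {p : Good m → ℝ}
    (h : IsOutcome b μ p) : ∑ i, p (μ i) = ∑ j, p j := by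
  obtain ⟨hassign, ⟨hp0, hpnn⟩, hbud, huniq⟩ := h
  rw [← Finset.sum_fiberwise' Finset.univ μ p]
  refine Finset.sum_congr rfl fun j _ => ?_
  rw [Finset.sum_const, nsmul_eq_mul]
  rcases eq_or_lt_of_le (hpnn j) with h0 | hpos
  · rw [← h0]; ring
  · obtain ⟨i, hi, hiu⟩ := huniq j hpos
    have : (Finset.univ.filter fun i' => μ i' = j) = {i} := by
      ext i'
      simp only [Finset.mem_filter, Finset.mem_univ, true_and, Finset.mem_singleton]
      exact ⟨fun h' => hiu i' h' ▸ rfl, fun h' => h' ▸ hi⟩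
    rw [this]; simp

/-- A bidder-optimal core outcome (one whose bidder utilities weakly
dominate those of every core outcome) maximizes welfare among all core outcomes. -/
theorem bidder_optimal_core_welfare_max {n m : ℕ}
    (v : Fin n → Good m → ℕ) (b : Fin n → ℕ)
    (hv0 : ∀ i, v i 0 = 0) (hb : ∀ i, 0 < b i)
    (μ : Fin n → Good m) (p : Good m → ℝ)
    (hcore : IsCore v b μ p)
    (hopt : ∀ (ν : Fin n → Good m) (q : Good m → ℝ), IsCore v b ν q →
      ∀ i, util v b q i (ν i) ≤ util v b p i (μ i)) :
    ∀ (ν : Fin n → Good m) (q : Good m → ℝ), IsCore v b ν q →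
      ∑ i, v i (ν i) ≤ ∑ i, v i (μ i) := by
  intro ν q hcq
  obtain ⟨hoμ, hnbμ⟩ := hcore
  obtain ⟨hoν, hnbν⟩ := hcq
  have hpbud := hoμ.2.2.1
  have hqbud := hoν.2.2.1
  have hpnn := hoμ.2.1.2
  have hqnn := hoν.2.1.2
  -- utilities as reals
  set A : Fin n → ℝ := fun i => (v i (μ i) : ℝ) - p (μ i) with hA
  set B : Fin n → ℝ := fun i => (v i (ν i) : ℝ) - q (ν i) with hB
  have hBA : ∀ i, B i ≤ A i := by
    intro i
    have := hopt ν q ⟨hoν, hnbν⟩ i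
    rw [util, util, if_pos (hqbud i), if_pos (hpbud i)] at this
    exact_mod_cast this
  -- key: for goods with q j > p j
  have hkey : ∀ j : Good m, p j < q j → ∃ i, ν i = j ∧ q j - p j ≤ A i - B i := by
    intro j hj
    have hqpos : 0 < q j := lt_of_le_of_lt (hpnn j) hj
    obtain ⟨i, hi, _⟩ := hoν.2.2.2 j hqpos
    refine ⟨i, hi, ?_⟩
    have hqb : q j ≤ (b i : ℝ) := hi ▸ hqbud i
    have hpb : p j < (b i : ℝ) := lt_of_lt_of_le hj hqb
    have hnb := hnbμ i j
    rw [IsBlockingPair, not_and_or] at hnb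
    have hle : util v b p i j ≤ util v b p i (μ i) := by
      rcases hnb with h | h
      · exact not_lt.mp h
      · exact absurd hpb h
    rw [util, util, if_pos (hpbud i), if_pos (le_of_lt hpb)] at hle
    have hle' : (v i j : ℝ) - p j ≤ (v i (μ i) : ℝ) - p (μ i) := by exact_mod_cast hle
    simp only [hA, hB, hi]
    linarith
  -- sum of price gaps bounded by sum of utility gaps
  have hsum : ∑ j, (q j - p j) ≤ ∑ i, (A i - B i) := by
    classical
    set T : Finset (Good m) := Finset.univ.filter fun j => p j < q j with hT
    have step1 : ∑ j, (q j - p j) ≤ ∑ j ∈ T, (q j - p j) := by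
      rw [← Finset.sum_filter_add_sum_filter_not Finset.univ (fun j => p j < q j)
        (fun j => q j - p j)]
      have : ∑ j ∈ Finset.univ.filter fun j => ¬ p j < q j, (q j - p j) ≤ 0 := by
        refine Finset.sum_nonpos fun j hj => ?_
        have := (Finset.mem_filter.mp hj).2
        linarith [not_lt.mp this]
      linarith
    rcases Finset.eq_empty_or_nonempty T with hTe | ⟨j0, hj0⟩
    · rw [hTe, Finset.sum_empty] at step1
      refine le_trans step1 (Finset.sum_nonneg fun i _ => ?_)
      linarith [hBA i]
    · have hj0' : p j0 < q j0 := (Finset.mem_filter.mp hj0).2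
      obtain ⟨i0, -, -⟩ := hkey j0 hj0'
      set ι : Good m → Fin n := fun j =>
        if h : p j < q j then Classical.choose (hkey j h) else i0 with hι
      have hν : ∀ j ∈ T, ν (ι j) = j := by
        intro j hj
        have h : p j < q j := (Finset.mem_filter.mp hj).2
        simp only [hι, dif_pos h]
        exact (Classical.choose_spec (hkey j h)).1
      have hgap : ∀ j ∈ T, q j - p j ≤ A (ι j) - B (ι j) := by
        intro j hj
        have h : p j < q j := (Finset.mem_filter.mp hj).2
        simp only [hι, dif_pos h]
        exact (Classical.choose_spec (hkey j h)).2
      have hinj : Set.InjOn ι T := by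
        intro j hj j' hj' he
        rw [← hν j (by simpa using hj), ← hν j' (by simpa using hj'), he]
      calc ∑ j, (q j - p j) ≤ ∑ j ∈ T, (q j - p j) := step1
        _ ≤ ∑ j ∈ T, (A (ι j) - B (ι j)) := Finset.sum_le_sum hgap
        _ = ∑ i ∈ T.image ι, (A i - B i) := by
            rw [Finset.sum_image fun j hj j' hj' => hinj hj hj']
        _ ≤ ∑ i, (A i - B i) := by
            refine Finset.sum_le_sum_of_subset_of_nonneg (Finset.subset_univ _)
              fun i _ _ => ?_
            linarith [hBA i]
  -- welfare identities
  have hWμ : (∑ i, (v i (μ i) : ℝ)) = ∑ i, A i + ∑ j, p j := by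
    rw [← sum_price_assigned hoμ, ← Finset.sum_add_distrib]
    refine Finset.sum_congr rfl fun i _ => by simp [hA]
  have hWν : (∑ i, (v i (ν i) : ℝ)) = ∑ i, B i + ∑ j, q j := by
    rw [← sum_price_assigned hoν, ← Finset.sum_add_distrib]
    refine Finset.sum_congr rfl fun i _ => by simp [hB]
  have : (∑ i, (v i (ν i) : ℝ)) ≤ ∑ i, (v i (μ i) : ℝ) := by
    rw [hWμ, hWν]
    have h1 : ∑ j, (q j - p j) = ∑ j, q j - ∑ j, p j := Finset.sum_sub_distrib _ _
    have h2 : ∑ i, (A i - B i) = ∑ i, A i - ∑ i, B i := Finset.sum_sub_distrib _ _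
    linarith
  exact_mod_cast this
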